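/- For fixed positive constants c, d (with d ≥ 1) and nonnegative constants p_i, q_i > 0 for i in a finite index set, the function f(x) = (c + x) / (d + (m+2)x + Σ_i min{p_i + x, (q_i + (m+2)x)/r_i}) with r_i ≥ 1 and m ≥ 0 is strictly increasing on [0, ∞) provided c ≥ 0 and the denominator is positive, and more specifically: for a_{bi} ≥ 1, the function f(x) = (ε₀ + x) / (1 + a_{bw} + a_{i₀w} + (a_{bi₀}+2)x + Σ_{i ≠ i₀} min{a_{iw} + ε₀ + x, (a_{bw} + (a_{bi₀}+2)x)/a_{bi}}) is strictly increasing in x ≥ 0. -/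

import Mathlib

open Finset

/-- the function f appearing in the optimality proof is strictly increasing
on [0, ∞). -/
theorem stmt15 (s : Finset ℕ) (ε0 abw ai0w abi0 : ℝ) (aiw abi : ℕ → ℝ)
    (hε0 : 0 ≤ ε0) (habw : 0 < abw) (hai0w : 0 < ai0w) (habi0 : 1 ≤ abi0)
    (haiw : ∀ i ∈ s, 0 < aiw i) (habi : ∀ i ∈ s, 1 ≤ abi i)
    (hkey : (abi0 + 2) * ε0 ≤ abw) :
    StrictMonoOn (fun x : ℝ => (ε0 + x) /
      (1 + abw + ai0w + (abi0 + 2) * x +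
        ∑ i ∈ s, min (aiw i + ε0 + x) ((abw + (abi0 + 2) * x) / abi i)))
      (Set.Ici 0) := by
  intro x hx y hy hxy
  simp only [Set.mem_Ici] at hx hy
  have hyx : 0 < y - x := by linarith
  set m : ℕ → ℝ → ℝ := fun i t => min (aiw i + ε0 + t) ((abw + (abi0 + 2) * t) / abi i)
    with hm
  have hmnn : ∀ t, 0 ≤ t → ∀ i ∈ s, (0:ℝ) ≤ m i t := by
    intro t ht i hi
    have h1 := haiw i hi
    have h2 := habi i hi
    refine le_min (by linarith) (div_nonneg (by nlinarith) (by linarith))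
  have hD : ∀ t, 0 ≤ t → 0 < 1 + abw + ai0w + (abi0 + 2) * t + ∑ i ∈ s, m i t := by
    intro t ht
    have h := Finset.sum_nonneg (hmnn t ht)
    nlinarith
  have hDx := hD x hx
  have hDy := hD y hy
  show (ε0 + x) / (1 + abw + ai0w + (abi0 + 2) * x + ∑ i ∈ s, m i x)
      < (ε0 + y) / (1 + abw + ai0w + (abi0 + 2) * y + ∑ i ∈ s, m i y)
  rw [div_lt_div_iff₀ hDx hDy]
  have hterm : ∀ i ∈ s, (ε0 + x) * (m i y - m i x) ≤ (y - x) * m i x := by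
    intro i hi
    have h1 := haiw i hi
    have h2 := habi i hi
    have habin : (0:ℝ) < abi i := by linarith
    by_cases h : aiw i + ε0 + x ≤ (abw + (abi0 + 2) * x) / abi i
    · have hmx : m i x = aiw i + ε0 + x := min_eq_left h
      have hmy : m i y ≤ aiw i + ε0 + y := min_le_left _ _
      nlinarith [hmy, hmx]
    · push_neg at h
      have hmx : m i x = (abw + (abi0 + 2) * x) / abi i := min_eq_right h.le
      have hmy : m i y ≤ (abw + (abi0 + 2) * y) / abi i := min_le_right _ _
      have hA : (abw + (abi0 + 2) * x) / abi i * abi i = abw + (abi0 + 2) * x :=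
        div_mul_cancel₀ _ habin.ne'
      have hB : m i y * abi i ≤ abw + (abi0 + 2) * y := by
        rw [← le_div_iff₀ habin]; exact hmy
      rw [hmx]
      rw [← mul_le_mul_iff_left₀ habin]
      have key : (ε0 + x) * (abi0 + 2) ≤ abw + (abi0 + 2) * x := by nlinarith
      calc (ε0 + x) * (m i y - (abw + (abi0 + 2) * x) / abi i) * abi i
          = (ε0 + x) * (m i y * abi i - (abw + (abi0 + 2) * x) / abi i * abi i) := by ring
        _ ≤ (ε0 + x) * ((abw + (abi0 + 2) * y) - (abw + (abi0 + 2) * x)) := by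
            rw [hA]; exact mul_le_mul_of_nonneg_left (by linarith) (by linarith)
        _ = (ε0 + x) * ((abi0 + 2) * (y - x)) := by ring
        _ ≤ (y - x) * (abw + (abi0 + 2) * x) := by nlinarith
        _ = (y - x) * ((abw + (abi0 + 2) * x) / abi i) * abi i := by
            rw [mul_assoc, hA]
  have hsum : (ε0 + x) * (∑ i ∈ s, m i y - ∑ i ∈ s, m i x) ≤ (y - x) * ∑ i ∈ s, m i x := by
    rw [← Finset.sum_sub_distrib, Finset.mul_sum, Finset.mul_sum]
    exact Finset.sum_le_sum hterm
  have hbase : (ε0 + x) * ((abi0 + 2) * (y - x)) < (y - x) * (1 + abw + ai0w + (abi0 + 2) * x) := by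
    nlinarith
  nlinarith [hsum, hbase]
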